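/- arXiv:1811.02241 — 4 statements merged into one kernel-verified Lean document; each statement's English description precedes it below -/
import Mathlib

section
/- Let p be a prime number, G a Hausdorff topological group, and x ∈ G a topologically unipotent element (x^(p^n) → 1 as n → ∞) such that the closure of the cyclic subgroup generated by x is compact. Let J be a closed subgroup of G and c ≥ 1 an integer coprime to p such that x^c ∈ J. Then x ∈ J. -/
open Filter Topology

/-- For a prime `p`, if `x` is a topologically unipotent element of a Hausdorff
topological group generating a relatively compact cyclic subgroup, `J` is a closed
subgroup and `c ≥ 1` is coprime to `p` with `x ^ c ∈ J`, then `x ∈ J`. -/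
theorem stmt_1 (p : ℕ) (hp : p.Prime) {G : Type*} [Group G] [TopologicalSpace G]
    [IsTopologicalGroup G] [T2Space G] (x : G)
    (htu : Tendsto (fun n : ℕ => x ^ p ^ n) atTop (𝓝 1))
    (hcompact : IsCompact (closure (Subgroup.zpowers x : Set G)))
    (J : Subgroup G) (hJ : IsClosed (J : Set G))
    (c : ℕ) (hc : 1 ≤ c) (hcp : Nat.Coprime c p) (hxc : x ^ c ∈ J) :
    x ∈ J := by
  set d := c.totient with hd
  have hd1 : 1 ≤ d := Nat.totient_pos.2 hc
  have hpd : p ^ d ≡ 1 [MOD c] := Nat.ModEq.pow_totient hcp.symm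
  have hppos : 0 < p := hp.pos
  have hple : ∀ n : ℕ, 1 ≤ p ^ (n * d) := fun n => Nat.one_le_pow _ _ hppos
  have hdvd : ∀ n : ℕ, c ∣ p ^ (n * d) - 1 := by
    intro n
    have h1 : p ^ (n * d) ≡ 1 [MOD c] := by
      have := hpd.pow n
      simpa [← pow_mul, mul_comm d n] using this
    exact (Nat.modEq_iff_dvd' (hple n)).mp h1.symm
  -- the sequence x ^ (p ^ (n*d) - 1) lies in J
  have hmemJ : ∀ n : ℕ, x ^ (p ^ (n * d) - 1) ∈ J := by
    intro n
    obtain ⟨m, hm⟩ := hdvd n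
    rw [hm, pow_mul]
    exact pow_mem hxc m
  -- and tends to x⁻¹
  have htend : Tendsto (fun n : ℕ => x ^ (p ^ (n * d) - 1)) atTop (𝓝 x⁻¹) := by
    have hsub : Tendsto (fun n : ℕ => x ^ p ^ (n * d)) atTop (𝓝 1) := by
      refine htu.comp ?_
      exact tendsto_atTop_mono (fun n => Nat.le_mul_of_pos_right n hd1) tendsto_id
    have heq : ∀ n : ℕ, x ^ (p ^ (n * d) - 1) = x ^ p ^ (n * d) * x⁻¹ := by
      intro n
      have : x ^ p ^ (n * d) = x ^ (p ^ (n * d) - 1) * x := by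
        rw [← pow_succ, Nat.sub_add_cancel (hple n)]
      rw [this, mul_assoc, mul_inv_cancel, mul_one]
    simp only [heq]
    simpa using hsub.mul tendsto_const_nhds
  have hxinv : x⁻¹ ∈ J :=
    hJ.mem_of_tendsto htend (Eventually.of_forall fun n => hmemJ n)
  simpa using J.inv_mem hxinv
end

section
/- Let p be a prime number and N ≥ 1 an integer. Every element x of GL_N(ℤ_p) — the group of invertible N×N matrices with entries in the p-adic integers whose inverses also have entries in ℤ_p, topologized by entrywise convergence — admits a unique decomposition x = u·v where u·v = v·u, u has finite order coprime to p, and v is topologically unipotent, i.e. v^(p^n) tends to the identity matrix as n → ∞. -/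
open Filter Topology

section Aux
variable {p : ℕ} [hp : Fact p.Prime] {N : ℕ}

/-- All entries divisible by `p^k`. -/
def Mdvd (k : ℕ) (A : Matrix (Fin N) (Fin N) ℤ_[p]) : Prop :=
  ∀ i j, (p : ℤ_[p]) ^ k ∣ A i j

theorem Mdvd.mul_left {k : ℕ} {A : Matrix (Fin N) (Fin N) ℤ_[p]} (h : Mdvd k A)
    (B : Matrix (Fin N) (Fin N) ℤ_[p]) : Mdvd k (B * A) := by
  intro i j
  rw [Matrix.mul_apply]
  exact Finset.dvd_sum fun l _ => Dvd.dvd.mul_left (h l j) _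

theorem Mdvd.mul_right {k : ℕ} {A : Matrix (Fin N) (Fin N) ℤ_[p]} (h : Mdvd k A)
    (B : Matrix (Fin N) (Fin N) ℤ_[p]) : Mdvd k (A * B) := by
  intro i j
  rw [Matrix.mul_apply]
  exact Finset.dvd_sum fun l _ => Dvd.dvd.mul_right (h i l) _

theorem Mdvd.mul {k l : ℕ} {A B : Matrix (Fin N) (Fin N) ℤ_[p]} (hA : Mdvd k A)
    (hB : Mdvd l B) : Mdvd (k + l) (A * B) := by
  intro i j
  rw [Matrix.mul_apply, pow_add]
  exact Finset.dvd_sum fun t _ => mul_dvd_mul (hA i t) (hB t j)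

theorem Mdvd.mono {k l : ℕ} {A : Matrix (Fin N) (Fin N) ℤ_[p]} (h : Mdvd k A) (hlk : l ≤ k) :
    Mdvd l A := fun i j => dvd_trans (pow_dvd_pow _ hlk) (h i j)

theorem Mdvd.pow_sub_one {k : ℕ} {A : Matrix (Fin N) (Fin N) ℤ_[p]} (h : Mdvd k (A - 1)) (m : ℕ) :
    Mdvd k (A ^ m - 1) := by
  induction m with
  | zero => intro i j; simp
  | succ m ih =>
    have hA : A ^ (m + 1) - 1 = A ^ m * (A - 1) + (A ^ m - 1) := by
      rw [pow_succ]; noncomm_ring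
    rw [hA]
    intro i j
    rw [Matrix.add_apply]
    exact dvd_add (h.mul_left _ i j) (ih i j)

theorem Mdvd.pow {k : ℕ} {A : Matrix (Fin N) (Fin N) ℤ_[p]} (h : Mdvd k A) {m : ℕ}
    (hm : m ≠ 0) : Mdvd k (A ^ m) := by
  induction m with
  | zero => exact absurd rfl hm
  | succ m ih =>
    rcases Nat.eq_zero_or_pos m with h0 | h0
    · subst h0; simpa using h
    · rw [pow_succ]
      exact (ih h0.ne').mul_right _

theorem Mdvd.pow_p {k : ℕ} (hk : 1 ≤ k) {A : Matrix (Fin N) (Fin N) ℤ_[p]}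
    (h : Mdvd k (A - 1)) : Mdvd (k + 1) (A ^ p - 1) := by
  have hexp : A ^ p = ∑ m ∈ Finset.range (p + 1),
      (A - 1) ^ m * 1 ^ (p - m) * (p.choose m : Matrix (Fin N) (Fin N) ℤ_[p]) := by
    conv_lhs => rw [← sub_add_cancel A 1]
    exact Commute.add_pow (Commute.one_right _) p
  have hsum : A ^ p - 1 = ∑ m ∈ Finset.range p,
      (A - 1) ^ (m + 1) * 1 ^ (p - (m + 1)) * (p.choose (m + 1) : Matrix (Fin N) (Fin N) ℤ_[p]) := by
    rw [hexp, Finset.sum_range_succ']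
    simp
  rw [hsum]
  intro i j
  rw [Matrix.sum_apply]
  refine Finset.dvd_sum fun m hm => ?_
  rw [Finset.mem_range] at hm
  simp only [one_pow, mul_one]
  rcases lt_or_eq_of_le (Nat.succ_le_of_lt hm) with hlt | heq
  · -- m + 1 < p : p divides the binomial coefficient
    have hdvd : (p : ℤ_[p]) ^ 1 ∣ ((p.choose (m + 1) : ℕ) : ℤ_[p]) := by
      rw [pow_one]
      exact_mod_cast Nat.cast_dvd_cast (α := ℤ_[p])
        (hp.out.dvd_choose_self (Nat.succ_ne_zero m) hlt)
    have h1 : Mdvd (k := k) ((A - 1) ^ (m + 1)) := h.pow (Nat.succ_ne_zero m)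
    have h2 : Mdvd (k := 1) ((p.choose (m + 1) : Matrix (Fin N) (Fin N) ℤ_[p])) := by
      intro i j
      rw [← Matrix.diagonal_natCast, Matrix.diagonal_apply]
      split
      · simpa using hdvd
      · exact dvd_zero _
    exact (h1.mul h2) i j
  · -- m + 1 = p : use (A-1)^p = (A-1) * (A-1)^(p-1)
    have h2 : Mdvd (k := k + k) ((A - 1) ^ (m + 1)) := by
      have : (A - 1) ^ (m + 1) = (A - 1) * (A - 1) ^ m := by
        rw [pow_succ']
      rw [this]
      have hm1 : m ≠ 0 := by
        intro h0; rw [h0] at heq; exact hp.out.one_lt.ne heq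
      exact h.mul (h.pow hm1)
    exact ((h2.mono (by omega : k + 1 ≤ k + k)).mul_right _) i j

end Aux

section GLpart
variable {p : ℕ} [hp : Fact p.Prime] {N : ℕ}

theorem Mdvd.pow_p_pow {k : ℕ} (hk : 1 ≤ k) {A : Matrix (Fin N) (Fin N) ℤ_[p]}
    (h : Mdvd k (A - 1)) (n : ℕ) : Mdvd (k + n) (A ^ p ^ n - 1) := by
  induction n with
  | zero => simpa using h
  | succ n ih =>
    have : A ^ p ^ (n + 1) = (A ^ p ^ n) ^ p := by rw [← pow_mul, pow_succ]
    rw [this]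
    have := ih.pow_p (le_trans hk (Nat.le_add_right _ _))
    simpa [add_assoc] using this

theorem Mdvd.one_sub {k : ℕ} {A : Matrix (Fin N) (Fin N) ℤ_[p]} (h : Mdvd k (A - 1)) :
    Mdvd k (1 - A) := by
  intro i j
  have : (1 - A) i j = -((A - 1) i j) := by
    simp [Matrix.sub_apply]
  rw [this]
  exact (dvd_neg).mpr (h i j)

theorem Mdvd.rev {k : ℕ} {A B : Matrix (Fin N) (Fin N) ℤ_[p]} (h : Mdvd k (A - B)) :
    Mdvd k (B - A) := by
  intro i j
  have h2 : (B - A) i j = -((A - B) i j) := by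
    simp [Matrix.sub_apply]
  rw [h2]
  exact dvd_neg.mpr (h i j)

theorem Mdvd.units_inv {k : ℕ} {g : GL (Fin N) ℤ_[p]}
    (h : Mdvd k ((g : Matrix (Fin N) (Fin N) ℤ_[p]) - 1)) :
    Mdvd k ((↑g⁻¹ : Matrix (Fin N) (Fin N) ℤ_[p]) - 1) := by
  have key : (↑g⁻¹ : Matrix (Fin N) (Fin N) ℤ_[p]) - 1
      = (↑g⁻¹ : Matrix (Fin N) (Fin N) ℤ_[p]) * (1 - (g : Matrix (Fin N) (Fin N) ℤ_[p])) := by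
    rw [mul_sub, mul_one]
    congr 1
    exact (Units.inv_mul g).symm ▸ rfl
  rw [key]
  exact (h.one_sub).mul_left _

/-- Entrywise convergence from growing divisibility. -/
theorem tendsto_of_mdvd {A : ℕ → Matrix (Fin N) (Fin N) ℤ_[p]} {B : Matrix (Fin N) (Fin N) ℤ_[p]}
    (h : ∀ n, Mdvd (n + 1) (A n - B)) : Tendsto A atTop (𝓝 B) := by
  refine tendsto_pi_nhds.mpr ?_
  intro i
  rw [tendsto_pi_nhds]
  intro j
  rw [tendsto_iff_norm_sub_tendsto_zero]
  have hp1 : 1 < (p : ℝ) := by exact_mod_cast hp.out.one_lt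
  have hlim : Tendsto (fun n : ℕ => ((p : ℝ)⁻¹) ^ (n + 1)) atTop (𝓝 0) :=
    (tendsto_pow_atTop_nhds_zero_of_lt_one (by positivity) (inv_lt_one_of_one_lt₀ hp1)).comp
      (tendsto_add_atTop_nat 1)
  refine squeeze_zero (fun n => norm_nonneg _) (fun n => ?_) hlim
  have hd : (p : ℤ_[p]) ^ (n + 1) ∣ (A n i j - B i j) := by
    have := h n i j
    simpa [Matrix.sub_apply] using this
  have := (PadicInt.norm_le_pow_iff_mem_span_pow (A n i j - B i j) (n + 1)).mpr
    (Ideal.mem_span_singleton.mpr hd)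
  calc ‖A n i j - B i j‖ ≤ (p : ℝ) ^ (-(n + 1 : ℕ) : ℤ) := this
    _ = ((p : ℝ)⁻¹) ^ (n + 1) := by
        rw [zpow_neg, zpow_natCast, inv_pow]

end GLpart

section GLpart2
variable {p : ℕ} [hp : Fact p.Prime] {N : ℕ}

theorem pdvd_iff_norm {z : ℤ_[p]} {k : ℕ} :
    (p : ℤ_[p]) ^ k ∣ z ↔ ‖z‖ ≤ ((p : ℝ)⁻¹) ^ k := by
  rw [← Ideal.mem_span_singleton, ← PadicInt.norm_le_pow_iff_mem_span_pow,
    zpow_neg, zpow_natCast, inv_pow]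

theorem units_tendsto_of_val {f : ℕ → GL (Fin N) ℤ_[p]} {u : GL (Fin N) ℤ_[p]}
    (h1 : Tendsto (fun n => ((f n : Matrix (Fin N) (Fin N) ℤ_[p]))) atTop (𝓝 ↑u))
    (h2 : Tendsto (fun n => ((↑(f n)⁻¹ : Matrix (Fin N) (Fin N) ℤ_[p]))) atTop (𝓝 ↑u⁻¹)) :
    Tendsto f atTop (𝓝 u) := by
  rw [Units.isEmbedding_embedProduct.tendsto_nhds_iff]
  have : Tendsto (fun n => ((f n : Matrix (Fin N) (Fin N) ℤ_[p]),
      MulOpposite.op ((↑(f n)⁻¹ : Matrix (Fin N) (Fin N) ℤ_[p])))) atTop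
      (𝓝 (↑u, MulOpposite.op (↑u⁻¹ : Matrix (Fin N) (Fin N) ℤ_[p]))) := by
    rw [nhds_prod_eq]
    exact h1.prodMk (MulOpposite.continuous_op.continuousAt.tendsto.comp h2)
  exact this

theorem tendsto_one_of_gdvd {f : ℕ → GL (Fin N) ℤ_[p]}
    (h : ∀ n, Mdvd (n + 1) ((f n : Matrix (Fin N) (Fin N) ℤ_[p]) - 1)) :
    Tendsto f atTop (𝓝 1) := by
  apply units_tendsto_of_val
  · simpa using tendsto_of_mdvd h
  · have h' : ∀ n, Mdvd (n + 1) ((↑(f n)⁻¹ : Matrix (Fin N) (Fin N) ℤ_[p]) - 1) :=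
      fun n => (h n).units_inv
    simpa using tendsto_of_mdvd h'

/-- A matrix sequence with increasing entrywise congruences has a limit. -/
theorem exists_matrix_limit {A : ℕ → Matrix (Fin N) (Fin N) ℤ_[p]}
    (h : ∀ m n, m ≤ n → Mdvd (m + 1) (A n - A m)) :
    ∃ B : Matrix (Fin N) (Fin N) ℤ_[p], Tendsto A atTop (𝓝 B) ∧
      ∀ m, Mdvd (m + 1) (B - A m) := by
  have hp1 : 1 < (p : ℝ) := by exact_mod_cast hp.out.one_lt
  have hinv0 : 0 ≤ ((p:ℝ))⁻¹ := by positivity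
  have hinv1 : ((p:ℝ))⁻¹ ≤ 1 := le_of_lt (inv_lt_one_of_one_lt₀ hp1)
  have hbound : ∀ i j m n, m ≤ n → ‖A n i j - A m i j‖ ≤ ((p : ℝ)⁻¹) ^ (m + 1) := by
    intro i j m n hmn
    have := h m n hmn i j
    rw [Matrix.sub_apply] at this
    exact pdvd_iff_norm.mp this
  have key : ∀ i j, ∃ b, Tendsto (fun n => A n i j) atTop (𝓝 b) := by
    intro i j
    apply cauchySeq_tendsto_of_complete
    apply cauchySeq_of_le_tendsto_0 (fun n => ((p : ℝ)⁻¹) ^ (n + 1))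
    · intro n m K hKn hKm
      rcases le_total n m with hnm | hmn
      · rw [dist_eq_norm, norm_sub_rev]
        exact le_trans (hbound i j n m hnm)
          (pow_le_pow_of_le_one hinv0 hinv1 (by omega))
      · rw [dist_eq_norm]
        exact le_trans (hbound i j m n hmn)
          (pow_le_pow_of_le_one hinv0 hinv1 (by omega))
    · exact (tendsto_pow_atTop_nhds_zero_of_lt_one hinv0
        (inv_lt_one_of_one_lt₀ hp1)).comp (tendsto_add_atTop_nat 1)
  choose B hB using key
  refine ⟨Matrix.of B, ?_, ?_⟩
  · refine tendsto_pi_nhds.mpr ?_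
    intro i
    rw [tendsto_pi_nhds]
    intro j
    exact hB i j
  · intro m i j
    rw [Matrix.sub_apply]
    rw [pdvd_iff_norm]
    have hlim : Tendsto (fun n => A n i j - A m i j) atTop (𝓝 (Matrix.of B i j - A m i j)) :=
      (hB i j).sub tendsto_const_nhds
    have : Tendsto (fun n => ‖A n i j - A m i j‖) atTop (𝓝 ‖Matrix.of B i j - A m i j‖) :=
      hlim.norm
    refine le_of_tendsto this (eventually_atTop.mpr ⟨m, fun n hn => hbound i j m n hn⟩)

end GLpart2

section Main
variable {p : ℕ} [hp : Fact p.Prime] {N : ℕ}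

/-- Any topological Jordan decomposition of `x` is the limit of `x ^ p ^ (c₀ * n)`,
provided `p ^ c₀ ≡ 1 mod m`. -/
theorem decomp_tendsto {x u v : GL (Fin N) ℤ_[p]} {m : ℕ}
    (hx : x = u * v) (hcomm : u * v = v * u) (hm : u ^ m = 1)
    (hv : Tendsto (fun n : ℕ => v ^ p ^ n) atTop (𝓝 1))
    {c₀ : ℕ} (hc₀ : 1 ≤ c₀) (hmod : p ^ c₀ ≡ 1 [MOD m]) :
    Tendsto (fun n : ℕ => x ^ p ^ (c₀ * n)) atTop (𝓝 u) := by
  have hcuv : Commute u v := hcomm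
  have hxn : ∀ n : ℕ, x ^ p ^ (c₀ * n) = u * v ^ p ^ (c₀ * n) := by
    intro n
    rw [hx, hcuv.mul_pow]
    congr 1
    have h1 : p ^ (c₀ * n) ≡ 1 [MOD m] := by
      rw [pow_mul]
      simpa using hmod.pow n
    have h2 : p ^ (c₀ * n) ≡ 1 [MOD orderOf u] :=
      h1.of_dvd (orderOf_dvd_of_pow_eq_one hm)
    calc u ^ p ^ (c₀ * n) = u ^ 1 := pow_eq_pow_iff_modEq.mpr h2
      _ = u := pow_one u
  rw [show (fun n : ℕ => x ^ p ^ (c₀ * n)) = fun n : ℕ => u * v ^ p ^ (c₀ * n) from funext hxn]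
  have hmul : Tendsto (fun n : ℕ => c₀ * n) atTop atTop :=
    tendsto_atTop_mono (fun n => Nat.le_mul_of_pos_left n hc₀) tendsto_id
  have := (tendsto_const_nhds (x := u)).mul (hv.comp hmul)
  simpa using this

end Main

section Exist
variable {p : ℕ} [hp : Fact p.Prime] {N : ℕ}

set_option maxHeartbeats 1000000 in
theorem exists_decomp (x : GL (Fin N) ℤ_[p]) :
    ∃ u v : GL (Fin N) ℤ_[p], x = u * v ∧ u * v = v * u ∧
      (∃ m : ℕ, 1 ≤ m ∧ Nat.Coprime m p ∧ u ^ m = 1) ∧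
      Tendsto (fun n : ℕ => v ^ p ^ n) atTop (𝓝 1) := by
  classical
  -- reduction mod p
  set Φ : GL (Fin N) ℤ_[p] →* GL (Fin N) (ZMod p) :=
    Matrix.GeneralLinearGroup.map (PadicInt.toZMod : ℤ_[p] →+* ZMod p) with hΦ
  set T : ℕ := orderOf (Φ x) with hT
  have hT0 : T ≠ 0 := (orderOf_pos (Φ x)).ne'
  set α : ℕ := T.factorization p with hα
  set μ : ℕ := T / p ^ α with hμ
  have hTμ : p ^ α * μ = T := Nat.ordProj_mul_ordCompl_eq_self T p
  have hμp : Nat.Coprime p μ := Nat.coprime_ordCompl hp.out hT0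
  have hμ0 : 0 < μ := Nat.ordCompl_pos p hT0
  -- x ^ T ≡ 1 mod p
  have hxT : Mdvd 1 ((↑(x ^ T) : Matrix (Fin N) (Fin N) ℤ_[p]) - 1) := by
    have h1 : Φ (x ^ T) = 1 := by rw [map_pow]; exact pow_orderOf_eq_one _
    have h2 : (RingHom.mapMatrix (PadicInt.toZMod : ℤ_[p] →+* ZMod p))
        (↑(x ^ T) : Matrix (Fin N) (Fin N) ℤ_[p]) = 1 := congrArg Units.val h1
    have h3 : (RingHom.mapMatrix (PadicInt.toZMod : ℤ_[p] →+* ZMod p))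
        ((↑(x ^ T) : Matrix (Fin N) (Fin N) ℤ_[p]) - 1) = 0 := by
      rw [map_sub, h2, map_one, sub_self]
    intro i j
    rw [pow_one]
    have h4 : PadicInt.toZMod (((↑(x ^ T) : Matrix (Fin N) (Fin N) ℤ_[p]) - 1) i j) = 0 := by
      have := congrFun (congrFun h3 i) j
      simpa [RingHom.mapMatrix_apply, Matrix.map_apply] using this
    have : (((↑(x ^ T) : Matrix (Fin N) (Fin N) ℤ_[p]) - 1) i j) ∈
        RingHom.ker (PadicInt.toZMod : ℤ_[p] →+* ZMod p) := h4
    rwa [PadicInt.ker_toZMod, PadicInt.maximalIdeal_eq_span_p,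
      Ideal.mem_span_singleton] at this
  -- key divisibility lemma for powers of any g with g^T ≡ 1 mod p
  have hkey : ∀ (g : GL (Fin N) ℤ_[p]),
      Mdvd 1 ((↑(g ^ T) : Matrix (Fin N) (Fin N) ℤ_[p]) - 1) →
      ∀ (a n : ℕ), T * p ^ n ∣ a →
      Mdvd (n + 1) ((↑(g ^ a) : Matrix (Fin N) (Fin N) ℤ_[p]) - 1) := by
    rintro g hg a n ⟨k, rfl⟩
    have : g ^ (T * p ^ n * k) = ((g ^ T) ^ p ^ n) ^ k := by
      rw [← pow_mul, ← pow_mul, mul_assoc]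
    rw [this]
    have h1 : Mdvd (1 + n) ((↑(g ^ T) : Matrix (Fin N) (Fin N) ℤ_[p]) ^ p ^ n - 1) :=
      hg.pow_p_pow le_rfl n
    have h2 := h1.pow_sub_one k
    rw [add_comm 1 n] at h2
    simpa only [Units.val_pow_eq_pow_val] using h2
  -- the exponent sequence
  set c : ℕ := μ.totient with hc
  have hc1 : 1 ≤ c := Nat.totient_pos.mpr hμ0
  have hpc : p ^ c ≡ 1 [MOD μ] := Nat.ModEq.pow_totient hμp
  set e : ℕ → ℕ := fun j => p ^ (c * (j + α)) with he
  have hediv : ∀ m n : ℕ, m ≤ n → T * p ^ m ∣ e n - e m := by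
    intro m n hmn
    have hsplit : c * (n + α) = c * (m + α) + c * (n - m) := by
      rw [← Nat.mul_add]
      congr 1
      omega
    have hen : e n = e m * p ^ (c * (n - m)) := by
      simp only [he]
      rw [hsplit, pow_add]
    have hdiff : e n - e m = e m * (p ^ (c * (n - m)) - 1) := by
      rw [hen, Nat.mul_sub (e m) _ 1, mul_one]
    rw [hdiff]
    have h1 : p ^ (α + m) ∣ e m := by
      apply pow_dvd_pow
      calc α + m ≤ (m + α) := by omega
        _ ≤ c * (m + α) := Nat.le_mul_of_pos_left _ hc1
    have h2 : μ ∣ p ^ (c * (n - m)) - 1 := by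
      have hmod : p ^ (c * (n - m)) ≡ 1 [MOD μ] := by
        rw [pow_mul]
        simpa using hpc.pow (n - m)
      exact (Nat.modEq_iff_dvd' (Nat.one_le_pow _ _ hp.out.pos)).mp hmod.symm
    have heq : T * p ^ m = p ^ (α + m) * μ := by
      rw [← hTμ, pow_add]
      ring
    rw [heq]
    exact mul_dvd_mul h1 h2
  -- x⁻¹ also satisfies the congruence
  have hxT' : Mdvd 1 ((↑(x⁻¹ ^ T) : Matrix (Fin N) (Fin N) ℤ_[p]) - 1) := by
    have := hxT.units_inv
    simpa [inv_pow] using this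
  -- Cauchy property of the sequence g ^ e n
  have hcauchy : ∀ (g : GL (Fin N) ℤ_[p]),
      Mdvd 1 ((↑(g ^ T) : Matrix (Fin N) (Fin N) ℤ_[p]) - 1) → ∀ m n, m ≤ n →
      Mdvd (m + 1) ((↑(g ^ e n) : Matrix (Fin N) (Fin N) ℤ_[p])
        - (↑(g ^ e m) : Matrix (Fin N) (Fin N) ℤ_[p])) := by
    intro g hg m n hmn
    have hle : e m ≤ e n := by
      apply Nat.pow_le_pow_right hp.out.pos
      exact Nat.mul_le_mul_left _ (by omega)
    have hsplit : g ^ e n = g ^ e m * g ^ (e n - e m) := by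
      rw [← pow_add]
      congr 1
      omega
    have hrw : (↑(g ^ e n) : Matrix (Fin N) (Fin N) ℤ_[p])
          - (↑(g ^ e m) : Matrix (Fin N) (Fin N) ℤ_[p])
        = (↑(g ^ e m) : Matrix (Fin N) (Fin N) ℤ_[p])
          * ((↑(g ^ (e n - e m)) : Matrix (Fin N) (Fin N) ℤ_[p]) - 1) := by
      rw [mul_sub, mul_one, ← Units.val_mul, ← hsplit]
    rw [hrw]
    exact (hkey g hg _ m (hediv m n hmn)).mul_left _
  obtain ⟨U, hUt, hUc⟩ := exists_matrix_limit
    (A := fun n => (↑(x ^ e n) : Matrix (Fin N) (Fin N) ℤ_[p])) (hcauchy x hxT)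
  obtain ⟨V, hVt, hVc⟩ := exists_matrix_limit
    (A := fun n => (↑(x⁻¹ ^ e n) : Matrix (Fin N) (Fin N) ℤ_[p])) (hcauchy x⁻¹ hxT')
  have hfun1 : (fun n => (↑(x ^ e n) : Matrix (Fin N) (Fin N) ℤ_[p]) * (↑(x⁻¹ ^ e n) : Matrix (Fin N) (Fin N) ℤ_[p]))
      = fun _ => (1 : Matrix (Fin N) (Fin N) ℤ_[p]) := by
    funext n
    rw [← Units.val_mul, inv_pow, mul_inv_cancel, Units.val_one]
  have hfun2 : (fun n => (↑(x⁻¹ ^ e n) : Matrix (Fin N) (Fin N) ℤ_[p]) * (↑(x ^ e n) : Matrix (Fin N) (Fin N) ℤ_[p]))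
      = fun _ => (1 : Matrix (Fin N) (Fin N) ℤ_[p]) := by
    funext n
    rw [← Units.val_mul, inv_pow, inv_mul_cancel, Units.val_one]
  have hUV : U * V = 1 := by
    have h := hUt.mul hVt
    rw [hfun1] at h
    exact tendsto_nhds_unique h tendsto_const_nhds
  have hVU : V * U = 1 := by
    have h := hVt.mul hUt
    rw [hfun2] at h
    exact tendsto_nhds_unique h tendsto_const_nhds
  set u : GL (Fin N) ℤ_[p] := ⟨U, V, hUV, hVU⟩ with hu
  have hut : Tendsto (fun n => x ^ e n) atTop (𝓝 u) := by
    apply units_tendsto_of_val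
    · exact hUt
    · show Tendsto (fun n => (↑((x ^ e n)⁻¹) : Matrix (Fin N) (Fin N) ℤ_[p])) atTop (𝓝 V)
      have hfn : (fun n => (↑((x ^ e n)⁻¹) : Matrix (Fin N) (Fin N) ℤ_[p]))
          = fun n => (↑(x⁻¹ ^ e n) : Matrix (Fin N) (Fin N) ℤ_[p]) := by
        funext n
        rw [inv_pow]
      rw [hfn]
      exact hVt
  -- u ^ μ = 1
  have huμ : u ^ μ = 1 := by
    have h1 : Tendsto (fun n => (x ^ e n) ^ μ) atTop (𝓝 (u ^ μ)) := hut.pow μ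
    have h2 : Tendsto (fun n => (x ^ e n) ^ μ) atTop (𝓝 1) := by
      have hfn : (fun n => (x ^ e n) ^ μ) = fun n => x ^ (e n * μ) := by
        funext n
        rw [← pow_mul]
      rw [hfn]
      apply tendsto_one_of_gdvd
      intro n
      apply hkey x hxT (e n * μ) n
      have heq : T * p ^ n = p ^ (α + n) * μ := by
        rw [← hTμ, pow_add]
        ring
      rw [heq]
      apply mul_dvd_mul _ dvd_rfl
      apply pow_dvd_pow
      calc α + n ≤ (n + α) := by omega
        _ ≤ c * (n + α) := Nat.le_mul_of_pos_left _ hc1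
    exact tendsto_nhds_unique h1 h2
  -- u commutes with x
  have hux : Commute u x := by
    have hcn : ∀ n, (↑(x ^ e n) : Matrix (Fin N) (Fin N) ℤ_[p]) * (↑x : Matrix (Fin N) (Fin N) ℤ_[p])
        = (↑x : Matrix (Fin N) (Fin N) ℤ_[p]) * (↑(x ^ e n) : Matrix (Fin N) (Fin N) ℤ_[p]) := by
      intro n
      have hc' := ((Commute.refl x).pow_left (e n)).eq
      calc (↑(x ^ e n) : Matrix (Fin N) (Fin N) ℤ_[p]) * (↑x : Matrix (Fin N) (Fin N) ℤ_[p])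
          = (↑(x ^ e n * x) : Matrix (Fin N) (Fin N) ℤ_[p]) := (Units.val_mul _ _).symm
        _ = (↑(x * x ^ e n) : Matrix (Fin N) (Fin N) ℤ_[p]) := by rw [hc']
        _ = (↑x : Matrix (Fin N) (Fin N) ℤ_[p]) * (↑(x ^ e n) : Matrix (Fin N) (Fin N) ℤ_[p]) :=
            Units.val_mul _ _
    have h1 : Tendsto (fun n => (↑(x ^ e n) : Matrix (Fin N) (Fin N) ℤ_[p]) * (↑x : Matrix (Fin N) (Fin N) ℤ_[p]))
        atTop (𝓝 (U * (↑x : Matrix (Fin N) (Fin N) ℤ_[p]))) := hUt.mul tendsto_const_nhds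
    have h2 : Tendsto (fun n => (↑(x ^ e n) : Matrix (Fin N) (Fin N) ℤ_[p]) * (↑x : Matrix (Fin N) (Fin N) ℤ_[p]))
        atTop (𝓝 ((↑x : Matrix (Fin N) (Fin N) ℤ_[p]) * U)) := by
      have hfn : (fun n => (↑(x ^ e n) : Matrix (Fin N) (Fin N) ℤ_[p]) * (↑x : Matrix (Fin N) (Fin N) ℤ_[p]))
          = fun n => (↑x : Matrix (Fin N) (Fin N) ℤ_[p]) * (↑(x ^ e n) : Matrix (Fin N) (Fin N) ℤ_[p]) :=
            funext hcn
      rw [hfn]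
      exact tendsto_const_nhds.mul hUt
    have hUx := tendsto_nhds_unique h1 h2
    apply Units.ext
    rw [Units.val_mul, Units.val_mul]
    exact hUx
  set v : GL (Fin N) ℤ_[p] := u⁻¹ * x with hv
  have hxuv : x = u * v := by rw [hv, mul_inv_cancel_left]
  have hcommv : u * v = v * u := by
    have h1 : u * v = x := by rw [hv, mul_inv_cancel_left]
    have h2 : v * u = x := by
      rw [hv, mul_assoc, ← hux.eq, ← mul_assoc, inv_mul_cancel, one_mul]
    rw [h1, h2]
  -- v is topologically unipotent
  set n₀ : ℕ := c * α with hn₀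
  have he0 : e 0 = p ^ n₀ := by simp [he, hn₀]
  have hu_pow : u ^ e 0 = u := by
    have hmodμ : e 0 ≡ 1 [MOD μ] := by
      rw [he0, hn₀, pow_mul]
      simpa using hpc.pow α
    have hmodo : e 0 ≡ 1 [MOD orderOf u] := hmodμ.of_dvd (orderOf_dvd_of_pow_eq_one huμ)
    calc u ^ e 0 = u ^ 1 := pow_eq_pow_iff_modEq.mpr hmodo
      _ = u := pow_one u
  have hcu : Commute u⁻¹ x := hux.inv_left
  have hve0 : v ^ e 0 = u⁻¹ * x ^ e 0 := by
    rw [hv, hcu.mul_pow]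
    congr 1
    rw [inv_pow, hu_pow]
  have hw1 : Mdvd 1 ((↑(v ^ e 0) : Matrix (Fin N) (Fin N) ℤ_[p]) - 1) := by
    have hUx : Mdvd 1 ((↑(x ^ e 0) : Matrix (Fin N) (Fin N) ℤ_[p]) - U) := (hUc 0).rev
    have hkey2 : (↑(v ^ e 0) : Matrix (Fin N) (Fin N) ℤ_[p]) - 1
        = V * ((↑(x ^ e 0) : Matrix (Fin N) (Fin N) ℤ_[p]) - U) := by
      rw [mul_sub, hVU]
      congr 1
      rw [hve0, Units.val_mul]
      rfl
    rw [hkey2]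
    exact hUx.mul_left V
  have hvt : Tendsto (fun n : ℕ => v ^ p ^ n) atTop (𝓝 1) := by
    set w : GL (Fin N) ℤ_[p] := v ^ p ^ n₀ with hwdef
    have hw1' : Mdvd 1 ((↑w : Matrix (Fin N) (Fin N) ℤ_[p]) - 1) := by
      rw [hwdef, ← he0]
      exact hw1
    have hwt : Tendsto (fun k : ℕ => w ^ p ^ k) atTop (𝓝 1) := by
      apply tendsto_one_of_gdvd
      intro n
      have h3 := hw1'.pow_p_pow le_rfl n
      rw [add_comm 1 n] at h3
      simpa only [Units.val_pow_eq_pow_val] using h3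
    have hsub : Tendsto (fun n : ℕ => n - n₀) atTop atTop :=
      tendsto_atTop_atTop.mpr fun b => ⟨b + n₀, fun a ha => by omega⟩
    have h2 := hwt.comp hsub
    apply h2.congr'
    filter_upwards [eventually_ge_atTop n₀] with n hn
    show w ^ p ^ (n - n₀) = v ^ p ^ n
    rw [hwdef, ← pow_mul, ← pow_add]
    congr 2
    omega
  exact ⟨u, v, hxuv, hcommv, ⟨μ, hμ0, hμp.symm, huμ⟩, hvt⟩

end Exist

/-- Topological Jordan decomposition in `GL_N(ℤ_p)`: every element factors uniquely
as a commuting product `u * v` with `u` of finite order coprime to `p` and `v`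
topologically unipotent. -/
theorem stmt_4 (p : ℕ) [Fact p.Prime] (N : ℕ) (hN : 1 ≤ N)
    (x : GL (Fin N) ℤ_[p]) :
    ∃! uv : GL (Fin N) ℤ_[p] × GL (Fin N) ℤ_[p],
      x = uv.1 * uv.2 ∧ uv.1 * uv.2 = uv.2 * uv.1 ∧
      (∃ m : ℕ, 1 ≤ m ∧ Nat.Coprime m p ∧ uv.1 ^ m = 1) ∧
      Tendsto (fun n : ℕ => uv.2 ^ p ^ n) atTop (𝓝 1) := by
  obtain ⟨u, v, h1, h2, h3, h4⟩ := exists_decomp x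
  refine ⟨(u, v), ⟨h1, h2, h3, h4⟩, ?_⟩
  rintro ⟨u', v'⟩ ⟨hx', hcomm', ⟨m', hm'1, hm'cop, hm'⟩, hv'⟩
  obtain ⟨m, hm1, hmcop, hm⟩ := h3
  have hMpos : 0 < m * m' := Nat.mul_pos hm1 hm'1
  set c₀ := (m * m').totient with hc₀def
  have hc₀ : 1 ≤ c₀ := Nat.totient_pos.mpr hMpos
  have hcop : Nat.Coprime p (m * m') := (Nat.Coprime.mul hmcop hm'cop).symm
  have hmod : p ^ c₀ ≡ 1 [MOD m * m'] := Nat.ModEq.pow_totient hcop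
  have t1 := decomp_tendsto h1 h2 hm h4 hc₀ (hmod.of_dvd (dvd_mul_right m m'))
  have t2 := decomp_tendsto hx' hcomm' hm' hv' hc₀ (hmod.of_dvd (dvd_mul_left m' m))
  have huu : u' = u := tendsto_nhds_unique t2 t1
  have hvv : v' = v := by
    have h5 : u * v' = u * v := by rw [← h1, hx', huu]
    exact mul_left_cancel h5
  simp only [Prod.mk.injEq]
  exact ⟨huu, hvv⟩
end

section
/- Let p be a prime number and c ≥ 1 an integer coprime to p. Let P be a group, σ an automorphism of P with σ^c = id, M a subgroup of P, and U₁ ⊇ U₂ ⊇ ⋯ ⊇ U_m ⊇ U_{m+1} = {1} a chain of subgroups of P such that for each i ∈ {1, …, m}: σ(U_i) = U_i, U_{i+1} is a normal subgroup of U_i, and the quotient group U_i/U_{i+1} is abelian with every element of order a power of p. Write U = U₁ and assume: (a) for every u ∈ U, if u·M·u⁻¹ = M then u = 1; (b) there exists u₁ ∈ U with σ(M) = u₁·M·u₁⁻¹. Then there exists v ∈ U such that the subgroup v·M·v⁻¹ is stable under σ, i.e. σ(v·M·v⁻¹) = v·M·v⁻¹. -/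
private lemma key_coh {Q : Type*} [CommGroup Q] (φ : Q →* Q) (c p n : ℕ)
    (hp : 0 < p) (hcp : Nat.Coprime c p) (w : Q) (hw : w ^ p ^ n = 1)
    (hφc : φ^[c] w = w)
    (hnorm : ∏ j ∈ Finset.range c, φ^[j] w = 1) :
    ∃ z : Q, φ z * w * z⁻¹ = 1 := by
  set t : Q := ∏ j ∈ Finset.range c, (φ^[j] w) ^ j with ht
  have h1 : φ t = t * w ^ c := by
    have e1 : φ t = φ t * φ (∏ j ∈ Finset.range c, φ^[j] w) := by
      rw [hnorm, map_one, mul_one]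
    rw [e1, ← map_mul, ht, ← Finset.prod_mul_distrib]
    have e2 : (∏ j ∈ Finset.range c, (φ^[j] w) ^ j * φ^[j] w)
        = ∏ j ∈ Finset.range c, (φ^[j] w) ^ (j + 1) :=
      Finset.prod_congr rfl fun j _ => (pow_succ _ _).symm
    rw [e2, map_prod]
    have e3 : ∀ j ∈ Finset.range c, φ ((φ^[j] w) ^ (j + 1)) = (φ^[j+1] w) ^ (j + 1) := by
      intro j _
      rw [map_pow, Function.iterate_succ_apply']
    rw [Finset.prod_congr rfl e3]
    have e4 : ∏ k ∈ Finset.range (c + 1), (φ^[k] w) ^ k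
        = (∏ j ∈ Finset.range c, (φ^[j+1] w) ^ (j + 1)) * (φ^[0] w) ^ 0 :=
      Finset.prod_range_succ' _ c
    have e5 : ∏ k ∈ Finset.range (c + 1), (φ^[k] w) ^ k
        = (∏ k ∈ Finset.range c, (φ^[k] w) ^ k) * (φ^[c] w) ^ c :=
      Finset.prod_range_succ _ c
    rw [pow_zero, mul_one] at e4
    rw [← e4, e5, hφc]
  obtain ⟨d, hd⟩ : ∃ d, c * d ≡ 1 [MOD p ^ n] := by
    refine ⟨c ^ (Nat.totient (p ^ n) - 1), ?_⟩
    have hpos : 0 < Nat.totient (p ^ n) := Nat.totient_pos.mpr (pow_pos hp n)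
    calc c * c ^ (Nat.totient (p ^ n) - 1) = c ^ Nat.totient (p ^ n) := by
          rw [← pow_succ']; congr 1; omega
      _ ≡ 1 [MOD p ^ n] := Nat.ModEq.pow_totient (hcp.pow_right n)
  have hwcd : (w ^ c) ^ d = w := by
    rw [← pow_mul]
    have hdvd : orderOf w ∣ p ^ n := orderOf_dvd_of_pow_eq_one hw
    have hmod : c * d ≡ 1 [MOD orderOf w] := hd.of_dvd hdvd
    calc w ^ (c * d) = w ^ 1 := pow_eq_pow_iff_modEq.mpr hmod
      _ = w := pow_one w
  refine ⟨t⁻¹ ^ d, ?_⟩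
  rw [map_pow, map_inv, h1]
  rw [mul_inv, mul_pow, inv_pow (w ^ c) d, hwcd]
  group

section helpers

variable {P : Type*} [Group P]

private lemma conj_map_conj_map (g h : P) (S : Subgroup P) :
    Subgroup.map (MulAut.conj g).toMonoidHom (Subgroup.map (MulAut.conj h).toMonoidHom S)
      = Subgroup.map (MulAut.conj (g * h)).toMonoidHom S := by
  rw [Subgroup.map_map]
  congr 1
  ext x
  simp [MulAut.conj_apply, mul_assoc]

private lemma conj_one_map (S : Subgroup P) :
    Subgroup.map (MulAut.conj (1 : P)).toMonoidHom S = S := by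
  have : (MulAut.conj (1 : P)).toMonoidHom = MonoidHom.id P := by
    ext x; simp
  rw [this, Subgroup.map_id]

private lemma aut_map_conj_map (τ : MulAut P) (g : P) (S : Subgroup P) :
    Subgroup.map τ.toMonoidHom (Subgroup.map (MulAut.conj g).toMonoidHom S)
      = Subgroup.map (MulAut.conj (τ g)).toMonoidHom (Subgroup.map τ.toMonoidHom S) := by
  rw [Subgroup.map_map, Subgroup.map_map]
  congr 1
  ext x
  simp [MulAut.conj_apply, mul_assoc]

private lemma mulaut_pow_apply (σ : MulAut P) (k : ℕ) (x : P) :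
    (σ ^ k) x = (⇑σ)^[k] x := by
  induction k with
  | zero => simp
  | succ k ih =>
    rw [pow_succ', MulAut.mul_apply, ih, Function.iterate_succ_apply']

end helpers

/-- Existence of a `σ`-stable conjugate of a Levi factor: given an automorphism `σ`
of order dividing `c` (coprime to `p`), a subgroup `M`, and a `σ`-stable filtration
`U 1 ⊇ ⋯ ⊇ U m ⊇ U (m+1) = ⊥` with abelian `p`-primary successive quotients, if no
nontrivial element of `U 1` normalizes `M` and `σ M` is conjugate to `M` by an element
of `U 1`, then some `U 1`-conjugate of `M` is `σ`-stable. -/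
theorem stmt_8 (p : ℕ) (hp : p.Prime) (c : ℕ) (hc : 1 ≤ c) (hcp : Nat.Coprime c p)
    {P : Type*} [Group P] (σ : MulAut P) (hσ : σ ^ c = 1)
    (M : Subgroup P) (m : ℕ) (U : ℕ → Subgroup P)
    (hchain : ∀ i : ℕ, 1 ≤ i → i ≤ m → U (i + 1) ≤ U i)
    (hlast : U (m + 1) = ⊥)
    (hσU : ∀ i : ℕ, 1 ≤ i → i ≤ m → Subgroup.map σ.toMonoidHom (U i) = U i)
    (hnormal : ∀ i : ℕ, 1 ≤ i → i ≤ m →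
      ∀ a ∈ U i, ∀ b ∈ U (i + 1), a * b * a⁻¹ ∈ U (i + 1))
    (hab : ∀ i : ℕ, 1 ≤ i → i ≤ m →
      ∀ a ∈ U i, ∀ b ∈ U i, a * b * a⁻¹ * b⁻¹ ∈ U (i + 1))
    (hpprim : ∀ i : ℕ, 1 ≤ i → i ≤ m → ∀ a ∈ U i, ∃ n : ℕ, a ^ p ^ n ∈ U (i + 1))
    (ha : ∀ u ∈ U 1, Subgroup.map (MulAut.conj u).toMonoidHom M = M → u = 1)
    (hb : ∃ u₁ ∈ U 1,
      Subgroup.map σ.toMonoidHom M = Subgroup.map (MulAut.conj u₁).toMonoidHom M) :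
    ∃ v ∈ U 1,
      Subgroup.map σ.toMonoidHom (Subgroup.map (MulAut.conj v).toMonoidHom M)
        = Subgroup.map (MulAut.conj v).toMonoidHom M := by
  classical
  obtain ⟨u₁, hu₁U, hu₁⟩ := hb
  -- pointwise order-c of σ
  have hσc : ∀ x : P, (⇑σ)^[c] x = x := by
    intro x
    rw [← mulaut_pow_apply, hσ, MulAut.one_apply]
  -- σ preserves each step of the (extended) filtration
  have hσmem : ∀ j : ℕ, 1 ≤ j → j ≤ m + 1 → ∀ x ∈ U j, σ x ∈ U j := by
    intro j h1 hj x hx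
    rcases Nat.lt_or_ge j (m + 1) with h | h
    · have hmap := hσU j h1 (by omega)
      rw [← hmap]
      exact ⟨x, hx, rfl⟩
    · have hj' : j = m + 1 := by omega
      subst hj'
      rw [hlast] at hx ⊢
      rw [Subgroup.mem_bot] at hx ⊢
      rw [hx, map_one]
  -- the filtration is contained in U 1
  have hUle : ∀ j : ℕ, 1 ≤ j → j ≤ m + 1 → U j ≤ U 1 := by
    intro j h1
    induction j, h1 using Nat.le_induction with
    | base => intro _; exact le_rfl
    | succ j hj ih =>
      intro hjm
      exact (hchain j hj (by omega)).trans (ih (by omega))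
  -- the main inductive step
  have step : ∀ i : ℕ, 1 ≤ i → i ≤ m → ∀ v ∈ U 1, σ v * u₁ * v⁻¹ ∈ U i →
      ∃ v' ∈ U 1, σ v' * u₁ * v'⁻¹ ∈ U (i + 1) := by
    intro i h1 him v hvU hwUi
    set w : P := σ v * u₁ * v⁻¹ with hwdef
    set M' : Subgroup P := Subgroup.map (MulAut.conj v).toMonoidHom M with hM'
    -- σ M' = w M' w⁻¹
    have hveq : σ v * u₁ = w * v := by rw [hwdef]; group
    have hσM' : Subgroup.map σ.toMonoidHom M' = Subgroup.map (MulAut.conj w).toMonoidHom M' := by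
      rw [hM', aut_map_conj_map, hu₁, conj_map_conj_map, hveq, ← conj_map_conj_map]
    -- no nontrivial element of U 1 normalizes M'
    have ha' : ∀ u ∈ U 1, Subgroup.map (MulAut.conj u).toMonoidHom M' = M' → u = 1 := by
      intro u huU hu
      have h2 : Subgroup.map (MulAut.conj (v⁻¹ * (u * v))).toMonoidHom M = M := by
        rw [← conj_map_conj_map, ← conj_map_conj_map, ← hM', hu, hM',
          conj_map_conj_map, inv_mul_cancel, conj_one_map]
      have h3 : v⁻¹ * (u * v) ∈ U 1 := by
        exact mul_mem (inv_mem hvU) (mul_mem huU hvU)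
      have h5 := ha _ h3 h2
      have h4 : u * v = v := by
        have h6 : v * (v⁻¹ * (u * v)) = v * 1 := by rw [h5]
        group at h6
        simpa using h6
      exact mul_right_cancel (a := u) (b := v) (c := 1) (by rw [h4, one_mul])
    -- iterates of w stay in U i
    have hiterw : ∀ k : ℕ, (⇑σ)^[k] w ∈ U i := by
      intro k
      induction k with
      | zero => exact hwUi
      | succ k ih =>
        rw [Function.iterate_succ_apply']
        exact hσmem i h1 (by omega) _ ih
    -- the "norm" sequence
    set N : ℕ → P := fun k => Nat.rec 1 (fun k Nk => (⇑σ)^[k] w * Nk) k with hN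
    have hN0 : N 0 = 1 := rfl
    have hNsucc : ∀ k, N (k + 1) = (⇑σ)^[k] w * N k := fun k => rfl
    have hNU : ∀ k, N k ∈ U i := by
      intro k
      induction k with
      | zero => rw [hN0]; exact one_mem _
      | succ k ih => rw [hNsucc]; exact mul_mem (hiterw k) ih
    -- σ^k M' = N k M' (N k)⁻¹
    have hkmap : ∀ k : ℕ, Subgroup.map (σ ^ k).toMonoidHom M'
        = Subgroup.map (MulAut.conj (N k)).toMonoidHom M' := by
      intro k
      induction k with
      | zero =>
        rw [pow_zero, hN0, conj_one_map]
        have : ((1 : MulAut P)).toMonoidHom = MonoidHom.id P := by ext x; simp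
        rw [this, Subgroup.map_id]
      | succ k ih =>
        have hcomp : ((σ ^ (k + 1)) : MulAut P).toMonoidHom
            = ((σ ^ k) : MulAut P).toMonoidHom.comp σ.toMonoidHom := by
          ext x
          simp [pow_succ, MulAut.mul_apply]
        rw [hcomp, ← Subgroup.map_map, hσM', aut_map_conj_map (σ ^ k) w M', ih,
          conj_map_conj_map, hNsucc, mulaut_pow_apply]
    -- N c = 1
    have hNc : N c = 1 := by
      have h5 : M' = Subgroup.map (MulAut.conj (N c)).toMonoidHom M' := by
        have := hkmap c
        rw [hσ] at this
        have hid : ((1 : MulAut P)).toMonoidHom = MonoidHom.id P := by ext x; simp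
        rw [hid, Subgroup.map_id] at this
        exact this
      exact ha' (N c) (hUle i h1 (by omega) (hNU c)) h5.symm
    -- set up the abelian quotient U i / U (i+1)
    set H := U i
    set K : Subgroup ↥(U i) := (U (i + 1)).subgroupOf (U i) with hK
    haveI hKnorm : K.Normal := by
      constructor
      intro b hb g
      rw [hK, Subgroup.mem_subgroupOf] at hb ⊢
      have := hnormal i h1 him (g : P) g.2 (b : P) hb
      simpa using this
    letI : CommGroup (↥(U i) ⧸ K) :=
      { (inferInstance : Group (↥(U i) ⧸ K)) with
        mul_comm := by
          intro a b
          induction a using QuotientGroup.induction_on with | H x =>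
          induction b using QuotientGroup.induction_on with | H y =>
          rw [← QuotientGroup.mk_mul, ← QuotientGroup.mk_mul, QuotientGroup.eq]
          rw [hK, Subgroup.mem_subgroupOf]
          have := hab i h1 him (y : P)⁻¹ (inv_mem y.2) (x : P)⁻¹ (inv_mem x.2)
          simpa [mul_assoc] using this }
    -- σ restricted to U i
    set σH : ↥(U i) →* ↥(U i) :=
      { toFun := fun x => ⟨σ (x : P), hσmem i h1 (by omega) _ x.2⟩
        map_one' := by ext; simp
        map_mul' := by intro x y; ext; simp } with hσH
    have hσHK : K ≤ K.comap σH := by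
      intro x hx
      rw [hK, Subgroup.mem_subgroupOf] at hx
      rw [Subgroup.mem_comap, hK, Subgroup.mem_subgroupOf]
      exact hσmem (i + 1) (by omega) (by omega) _ hx
    set σQ : ↥(U i) ⧸ K →* ↥(U i) ⧸ K := QuotientGroup.map K K σH hσHK with hσQ
    have hσQmk : ∀ x : ↥(U i), σQ (QuotientGroup.mk x) = QuotientGroup.mk (σH x) := by
      intro x; rfl
    -- iterate compatibility
    have hσHit : ∀ (k : ℕ) (x : ↥(U i)), ((⇑σH)^[k] x : P) = (⇑σ)^[k] (x : P) := by
      intro k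
      induction k with
      | zero => intro x; rfl
      | succ k ih =>
        intro x
        rw [Function.iterate_succ_apply', Function.iterate_succ_apply', ← ih]
        rfl
    have hσQit : ∀ (k : ℕ) (x : ↥(U i)),
        (⇑σQ)^[k] (QuotientGroup.mk x) = QuotientGroup.mk ((⇑σH)^[k] x) := by
      intro k
      induction k with
      | zero => intro x; rfl
      | succ k ih =>
        intro x
        rw [Function.iterate_succ_apply', Function.iterate_succ_apply', ih, hσQmk]
    set wH : ↥(U i) := ⟨w, hwUi⟩ with hwH
    set wb : ↥(U i) ⧸ K := QuotientGroup.mk wH with hwb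
    -- φ^[c] fixes wb
    have hφc : (⇑σQ)^[c] wb = wb := by
      rw [hwb, hσQit]
      congr 1
      ext
      rw [hσHit]
      exact hσc _
    -- norm condition in the quotient
    have hmkN : ∀ k : ℕ, QuotientGroup.mk (⟨N k, hNU k⟩ : ↥(U i))
        = ∏ j ∈ Finset.range k, (⇑σQ)^[j] wb := by
      intro k
      induction k with
      | zero =>
        rw [Finset.prod_range_zero]
        have h0 : (⟨N 0, hNU 0⟩ : ↥(U i)) = 1 := Subtype.ext hN0
        rw [h0, QuotientGroup.mk_one]
      | succ k ih =>
        have hsplit : (⟨N (k + 1), hNU (k + 1)⟩ : ↥(U i))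
            = (⇑σH)^[k] wH * ⟨N k, hNU k⟩ := by
          apply Subtype.ext
          show N (k + 1) = ((⇑σH)^[k] wH : P) * N k
          rw [hσHit, hNsucc]
        rw [hsplit, QuotientGroup.mk_mul, ih, Finset.prod_range_succ]
        rw [← hσQit, hwb]
        exact mul_comm _ _
    have hnormQ : ∏ j ∈ Finset.range c, (⇑σQ)^[j] wb = 1 := by
      rw [← hmkN c]
      have hc1 : (⟨N c, hNU c⟩ : ↥(U i)) = 1 := Subtype.ext hNc
      rw [hc1, QuotientGroup.mk_one]
    -- p-power order
    obtain ⟨n, hn⟩ := hpprim i h1 him w hwUi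
    have hwp : wb ^ p ^ n = 1 := by
      rw [hwb, ← QuotientGroup.mk_pow]
      rw [QuotientGroup.eq_one_iff]
      rw [hK, Subgroup.mem_subgroupOf]
      simpa using hn
    -- apply the key lemma
    obtain ⟨zb, hzb⟩ := key_coh σQ c p n hp.pos hcp wb hwp hφc hnormQ
    obtain ⟨zH, rfl⟩ := QuotientGroup.mk_surjective zb
    rw [hσQmk, ← QuotientGroup.mk_inv, hwb, ← QuotientGroup.mk_mul, ← QuotientGroup.mk_mul,
      QuotientGroup.eq_one_iff] at hzb
    rw [hK, Subgroup.mem_subgroupOf] at hzb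
    have hzb' : σ (zH : P) * w * (zH : P)⁻¹ ∈ U (i + 1) := by exact hzb
    refine ⟨(zH : P) * v, mul_mem (hUle i h1 (by omega) zH.2) hvU, ?_⟩
    have : σ ((zH : P) * v) * u₁ * ((zH : P) * v)⁻¹
        = σ (zH : P) * w * (zH : P)⁻¹ := by
      rw [hwdef, map_mul]
      group
    rw [this]
    exact hzb'
  -- main induction
  have main : ∀ k : ℕ, k ≤ m → ∃ v ∈ U 1, σ v * u₁ * v⁻¹ ∈ U (k + 1) := by
    intro k
    induction k with
    | zero =>
      intro _
      refine ⟨1, one_mem _, ?_⟩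
      simpa using hu₁U
    | succ k ih =>
      intro hk
      obtain ⟨v, hv, hw⟩ := ih (by omega)
      exact step (k + 1) (by omega) (by omega) v hv hw
  obtain ⟨v, hvU, hv1⟩ := main m le_rfl
  rw [hlast, Subgroup.mem_bot] at hv1
  have hσv : σ v * u₁ = v := by
    have h4 : (σ v * u₁ * v⁻¹) * v = 1 * v := by rw [hv1]
    group at h4
    simpa using h4
  refine ⟨v, hvU, ?_⟩
  rw [aut_map_conj_map, hu₁, conj_map_conj_map, hσv]
end

section
/- Let p be a prime number and c ≥ 1 an integer coprime to p. Let Γ be a compact Hausdorff topological group and (Γ_n)_{n ≥ 1} a decreasing sequence of normal subgroups of Γ with Γ₁ = Γ, forming a basis of neighbourhoods of the identity, such that for every n ≥ 1 the quotient group Γ_n/Γ_{n+1} is abelian and every one of its elements has order a power of p. Let σ be a continuous automorphism of Γ with σ^c = id and σ(Γ_n) = Γ_n for all n. Then for every g ∈ Γ there exist k, h ∈ Γ with σ(h) = h and g = σ(k)·h·k⁻¹. -/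
open Filter Topology

set_option maxHeartbeats 1000000

private lemma pow_eq_pow_mod_of_pow_eq_one {R : Type*} [Monoid R] {x : R} {n : ℕ}
    (hx : x ^ n = 1) (a : ℕ) : x ^ a = x ^ (a % n) := by
  conv_lhs => rw [← Nat.div_add_mod a n]
  rw [pow_add, pow_mul, hx, one_pow, one_mul]

private lemma eq_zero_of_coprime_smul {M : Type*} [AddCommGroup M] {c q : ℕ}
    (hcq : Nat.Coprime c q) {y : M} (h1 : c • y = 0) (h2 : q • y = 0) : y = 0 := by
  obtain ⟨u, v, huv⟩ := hcq.isCoprime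
  have key : ((u * c + v * q : ℤ)) • y = y := by rw [huv, one_zsmul]
  rw [add_zsmul, mul_zsmul, mul_zsmul, natCast_zsmul, natCast_zsmul, h1, h2,
    smul_zero, smul_zero, add_zero] at key
  exact key.symm

private lemma core_module {M : Type*} [AddCommGroup M] [Finite M] {p c : ℕ}
    (hc : 1 ≤ c) (hcp : ∀ t : ℕ, Nat.Coprime c (p ^ t))
    (htor : ∀ x : M, ∃ t : ℕ, p ^ t • x = 0)
    (S Θ : AddMonoid.End M) (hco : S * Θ = Θ * S) (hSc : S ^ c = 1)
    (F : ℕ) (hΘF : Θ ^ p ^ F = 1) (d : M)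
    (hd : (∑ i ∈ Finset.range c, S ^ i) d = 0) :
    ∃ b : M, ((S ^ (c - 1) - 1) + Θ * (S - 1)) b = -d := by
  classical
  set ν : AddMonoid.End M := ∑ i ∈ Finset.range c, S ^ i with hν
  have hν1 : ν * (S - 1) = 0 := by
    rw [hν, geom_sum_mul, hSc, sub_self]
  set B : AddSubgroup M := AddMonoidHom.range (S - 1 : AddMonoid.End M) with hB
  have memB : ∀ x : M, x ∈ B ↔ ∃ y, (S - 1) y = x := by
    intro x; rw [hB]; exact AddMonoidHom.mem_range
  have happly : ∀ (T T' : AddMonoid.End M) (x : M), (T * T') x = T (T' x) := fun _ _ _ => rfl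
  have hmulB : ∀ (T : AddMonoid.End M), T * (S - 1) = (S - 1) * T → ∀ x ∈ B, T x ∈ B := by
    intro T hT x hx
    obtain ⟨y, hy⟩ := (memB x).1 hx
    refine (memB _).2 ⟨T y, ?_⟩
    calc (S - 1) (T y) = ((S - 1) * T) y := rfl
      _ = (T * (S - 1)) y := by rw [hT]
      _ = T ((S - 1) y) := rfl
      _ = T x := by rw [hy]
  have cS : Commute S (S - 1) := (Commute.refl S).sub_right (Commute.one_right S)
  have cSΘ : Commute S Θ := hco
  have cΘ : Commute Θ (S - 1) := cSΘ.symm.sub_right (Commute.one_right Θ)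
  set u : AddMonoid.End M := S * Θ with hu
  have cu : Commute u (S - 1) := cS.mul_left cΘ
  -- Step A : d ∈ B
  have hdB : d ∈ B := by
    have hsub : c • d - ν d ∈ B := by
      have h1 : c • d = ∑ _i ∈ Finset.range c, d := by
        rw [Finset.sum_const, Finset.card_range]
      have h2 : ν d = ∑ i ∈ Finset.range c, (S ^ i) d := by
        rw [hν]; exact AddMonoidHom.finset_sum_apply _ _ _
      rw [h1, h2, ← Finset.sum_sub_distrib]
      refine AddSubgroup.sum_mem _ (fun i _ => ?_)
      refine (memB _).2 ⟨-((∑ j ∈ Finset.range i, S ^ j) d), ?_⟩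
      have hcomm : (S - 1) * (∑ j ∈ Finset.range i, S ^ j)
          = (∑ j ∈ Finset.range i, S ^ j) * (S - 1) :=
        (Commute.sum_right _ _ _ (fun j _ => (cS.pow_left j).symm)).eq
      have h3 : (S - 1) ((∑ j ∈ Finset.range i, S ^ j) d) = (S ^ i) d - d := by
        calc (S - 1) ((∑ j ∈ Finset.range i, S ^ j) d)
            = ((S - 1) * (∑ j ∈ Finset.range i, S ^ j)) d := rfl
          _ = ((∑ j ∈ Finset.range i, S ^ j) * (S - 1)) d := by rw [hcomm]
          _ = (S ^ i - 1) d := by rw [geom_sum_mul]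
          _ = (S ^ i) d - d := by
              rfl
      rw [map_neg, h3, neg_sub]
    obtain ⟨t, ht⟩ := htor d
    set φ : M →+ M ⧸ B := QuotientAddGroup.mk' B with hφ
    have e1 : φ (c • d - ν d) = 0 := (QuotientAddGroup.eq_zero_iff _).2 hsub
    have e2 : φ (c • d) = 0 := by
      rw [map_sub] at e1
      rw [hd, map_zero, sub_zero] at e1
      exact e1
    have e3 : c • φ d = 0 := by rw [← map_nsmul, e2]
    have e4 : p ^ t • φ d = 0 := by rw [← map_nsmul, ht, map_zero]
    exact (QuotientAddGroup.eq_zero_iff _).1 (eq_zero_of_coprime_smul (hcp t) e3 e4)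
  -- Step B : injectivity of u - 1 on B
  have hfix : ∀ y, y ∈ B → u y = y → y = 0 := by
    intro y hyB hyf
    obtain ⟨e, he1, he2⟩ := Nat.chineseRemainder (hcp F) 1 0
    have hue : u ^ e = S := by
      have h1 : u ^ e = S ^ e * Θ ^ e := cSΘ.mul_pow e
      have he1' : e % c = 1 % c := he1
      have he2' : e % p ^ F = 0 % p ^ F := he2
      have h2 : S ^ e = S := by
        rw [pow_eq_pow_mod_of_pow_eq_one hSc e, he1',
          ← pow_eq_pow_mod_of_pow_eq_one hSc 1, pow_one]
      have h3 : Θ ^ e = 1 := by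
        rw [pow_eq_pow_mod_of_pow_eq_one hΘF e, he2', Nat.zero_mod, pow_zero]
      rw [h1, h2, h3, mul_one]
    have hiter : ∀ n : ℕ, (u ^ n) y = y := by
      intro n; induction n with
      | zero => rfl
      | succ n ih =>
        rw [pow_succ]
        calc (u ^ n * u) y = (u ^ n) (u y) := rfl
          _ = (u ^ n) y := by rw [hyf]
          _ = y := ih
    have hSy : S y = y := by rw [← hue]; exact hiter e
    obtain ⟨x, hx⟩ := (memB y).1 hyB
    have h6 : ν y = 0 := by
      calc ν y = (ν * (S - 1)) x := by rw [← hx]; rfl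
        _ = (0 : AddMonoid.End M) x := by rw [hν1]
        _ = 0 := rfl
    have hSiy : ∀ i : ℕ, (S ^ i) y = y := by
      intro i; induction i with
      | zero => rfl
      | succ i ih =>
        rw [pow_succ]
        calc (S ^ i * S) y = (S ^ i) (S y) := rfl
          _ = (S ^ i) y := by rw [hSy]
          _ = y := ih
    have h7 : ν y = c • y := by
      rw [hν, (show (∑ i ∈ Finset.range c, S ^ i) y = ∑ i ∈ Finset.range c, (S ^ i) y by
          exact AddMonoidHom.finset_sum_apply _ _ _), Finset.sum_congr rfl (fun i _ => hSiy i),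
        Finset.sum_const, Finset.card_range]
    obtain ⟨t, ht⟩ := htor y
    exact eq_zero_of_coprime_smul (hcp t) (by rw [← h7, h6]) ht
  have hSB : ∀ x ∈ B, S x ∈ B := hmulB S cS.eq
  have huB : ∀ x ∈ B, u x ∈ B := hmulB u cu.eq
  set f : B → B := fun y => ⟨u ↑y - ↑y, AddSubgroup.sub_mem _ (huB _ y.2) y.2⟩ with hf
  have hinj : Function.Injective f := by
    intro y₁ y₂ hyy
    have h8 : u ↑y₁ - ↑y₁ = u ↑y₂ - ↑y₂ := congrArg Subtype.val hyy
    have h9 : u ((y₁ : M) - ↑y₂) = (y₁ : M) - ↑y₂ := by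
      rw [map_sub]; exact sub_eq_sub_iff_sub_eq_sub.mp h8
    have h10 := hfix _ (AddSubgroup.sub_mem _ y₁.2 y₂.2) h9
    exact Subtype.ext (sub_eq_zero.mp h10)
  have hsurj : Function.Surjective f := Finite.injective_iff_surjective.mp hinj
  -- assembly
  have hnd : -d ∈ B := AddSubgroup.neg_mem _ hdB
  have hSnd : S (-d) ∈ B := hSB _ hnd
  obtain ⟨⟨y, hyB⟩, hy⟩ := hsurj ⟨S (-d), hSnd⟩
  have hy' : u y - y = S (-d) := congrArg Subtype.val hy
  obtain ⟨b, hb⟩ := (memB y).1 hyB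
  refine ⟨b, ?_⟩
  have hS1 : S ^ (c - 1) * S = 1 := by
    rw [← pow_succ, Nat.sub_add_cancel hc, hSc]
  have hfact : S ^ (c - 1) * ((u - 1) * (S - 1)) = (S ^ (c - 1) - 1) + Θ * (S - 1) := by
    have h2 : S ^ (c - 1) * u = Θ := by rw [hu, ← mul_assoc, hS1, one_mul]
    have h3 : (u - 1) * (S - 1) = u * S - u - S + 1 := by noncomm_ring
    rw [h3, mul_add, mul_sub, mul_sub, ← mul_assoc, h2, mul_one, hS1]
    have h4 : Θ * (S - 1) = Θ * S - Θ := by noncomm_ring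
    rw [h4]
    abel
  rw [← hfact]
  have hub : (u - 1) ((S - 1) b) = u y - y := by
    rw [hb]
    rfl
  calc (S ^ (c - 1) * ((u - 1) * (S - 1))) b
      = (S ^ (c - 1)) ((u - 1) ((S - 1) b)) := rfl
    _ = (S ^ (c - 1)) (S (-d)) := by rw [hub, hy']
    _ = (S ^ (c - 1) * S) (-d) := rfl
    _ = -d := by rw [hS1]; rfl

private lemma step_finite {Q : Type*} [Group Q] [Finite Q] {p c : ℕ}
    (hc : 1 ≤ c) (hcp : ∀ t : ℕ, Nat.Coprime c (p ^ t))
    (hQtor : ∀ x : Q, ∃ t : ℕ, x ^ p ^ t = 1)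
    (τ : MulAut Q) (hτc : τ ^ c = 1)
    (A : Subgroup Q) (hAn : A.Normal)
    (habel : ∀ a ∈ A, ∀ b ∈ A, a * b = b * a)
    (hτA : ∀ a ∈ A, τ a ∈ A)
    (h : Q) (hδ : h⁻¹ * τ h ∈ A) :
    ∃ k ∈ A, τ (τ k * h * k⁻¹) = τ k * h * k⁻¹ := by
  letI : CommGroup ↥A :=
    { (inferInstance : Group ↥A) with
      mul_comm := fun a b => Subtype.ext (habel _ a.2 _ b.2) }
  letI : Finite (Additive ↥A) := Finite.of_equiv _ Additive.ofMul
  have hmemθ : ∀ a : ↥A, h⁻¹ * ↑a * h ∈ A := fun a => by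
    simpa using hAn.conj_mem _ a.2 h⁻¹
  set s₀ : ↥A →* ↥A := MonoidHom.mk' (fun a => ⟨τ ↑a, hτA _ a.2⟩)
    (fun a b => Subtype.ext (by simp)) with hs₀
  set θ₀ : ↥A →* ↥A := MonoidHom.mk' (fun a => ⟨h⁻¹ * ↑a * h, hmemθ a⟩)
    (fun a b => Subtype.ext (by push_cast; group)) with hθ₀
  set S : AddMonoid.End (Additive ↥A) :=
    AddMonoidHom.mk' (fun a => Additive.ofMul (s₀ a.toMul))
      (fun a b => congrArg Additive.ofMul (map_mul s₀ _ _)) with hSdef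
  set Θ : AddMonoid.End (Additive ↥A) :=
    AddMonoidHom.mk' (fun a => Additive.ofMul (θ₀ a.toMul))
      (fun a b => congrArg Additive.ofMul (map_mul θ₀ _ _)) with hΘdef
  set valQ : Additive ↥A → Q := fun a => ↑a.toMul with hvalQ
  have valS : ∀ a : Additive ↥A, valQ (S a) = τ (valQ a) := fun a => rfl
  have valΘ : ∀ a : Additive ↥A, valQ (Θ a) = h⁻¹ * valQ a * h := fun a => rfl
  have valmem : ∀ a : Additive ↥A, valQ a ∈ A := fun a => a.toMul.2
  have valinj : ∀ a b : Additive ↥A, valQ a = valQ b → a = b := fun a b hab =>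
    Additive.toMul.injective (Subtype.ext hab)
  have valpow : ∀ (n : ℕ) (a : Additive ↥A), valQ ((S ^ n) a) = (τ ^ n) (valQ a) := by
    intro n
    induction n with
    | zero => intro a; rw [pow_zero, pow_zero]; rfl
    | succ n ih =>
      intro a
      rw [pow_succ, pow_succ]
      calc valQ ((S ^ n * S) a) = valQ ((S ^ n) (S a)) := rfl
        _ = (τ ^ n) (valQ (S a)) := ih _
        _ = (τ ^ n) (τ (valQ a)) := rfl
        _ = ((τ ^ n) * τ) (valQ a) := rfl
  have hSc' : S ^ c = 1 := by
    apply AddMonoid.End.ext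
    intro a
    apply valinj
    rw [valpow c a, hτc]
    rfl
  have keyco : ∀ x ∈ A, τ (h⁻¹ * x * h) = h⁻¹ * τ x * h := by
    intro x hx
    have h1 : τ (h⁻¹ * x * h) = (τ h)⁻¹ * τ x * τ h := by
      simp [map_mul]
    have hτh : τ h = h * (h⁻¹ * τ h) := by group
    have hw : h⁻¹ * τ x * h ∈ A := by simpa using hAn.conj_mem _ (hτA _ hx) h⁻¹
    rw [h1]
    nth_rewrite 1 [hτh]
    nth_rewrite 2 [hτh]
    have h2 : (h * (h⁻¹ * τ h))⁻¹ * τ x * (h * (h⁻¹ * τ h))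
        = (h⁻¹ * τ h)⁻¹ * ((h⁻¹ * τ x * h) * (h⁻¹ * τ h)) := by group
    rw [h2, habel _ hw _ hδ]
    group
  have hco' : S * Θ = Θ * S := by
    apply AddMonoidHom.ext
    intro a
    apply valinj
    calc valQ ((S * Θ) a) = valQ (S (Θ a)) := rfl
      _ = τ (h⁻¹ * valQ a * h) := by rw [valS, valΘ]
      _ = h⁻¹ * τ (valQ a) * h := keyco _ (valmem a)
      _ = valQ (Θ (S a)) := by rw [valΘ, valS]
      _ = valQ ((Θ * S) a) := rfl
  have htorM : ∀ x : Additive ↥A, ∃ t : ℕ, p ^ t • x = 0 := by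
    intro x
    obtain ⟨t, ht⟩ := hQtor (valQ x)
    refine ⟨t, valinj _ _ ?_⟩
    have : valQ (p ^ t • x) = valQ x ^ p ^ t := by
      rw [hvalQ]
      simp [toMul_nsmul]
    rw [this, ht]
    rfl
  obtain ⟨F, hF⟩ := hQtor h
  have valΘn : ∀ (n : ℕ) (a : Additive ↥A),
      valQ ((Θ ^ n) a) = (h ^ n)⁻¹ * valQ a * h ^ n := by
    intro n
    induction n with
    | zero => intro a; rw [pow_zero, pow_zero]; simp
    | succ n ih =>
      intro a
      rw [pow_succ]
      calc valQ ((Θ ^ n * Θ) a) = valQ ((Θ ^ n) (Θ a)) := rfl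
        _ = (h ^ n)⁻¹ * (h⁻¹ * valQ a * h) * h ^ n := by rw [ih, valΘ]
        _ = (h ^ (n + 1))⁻¹ * valQ a * h ^ (n + 1) := by rw [pow_succ]; group
  have hΘF : Θ ^ p ^ F = 1 := by
    apply AddMonoid.End.ext
    intro a
    apply valinj
    rw [valΘn, hF]
    simp
  set D : ↥A := ⟨h⁻¹ * τ h, hδ⟩ with hD
  set d : Additive ↥A := Additive.ofMul D with hd0
  have tele : ∀ n : ℕ, valQ ((∑ i ∈ Finset.range n, S ^ i) d) = h⁻¹ * (τ ^ n) h := by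
    intro n
    induction n with
    | zero =>
      rw [Finset.range_zero, Finset.sum_empty, pow_zero]
      calc valQ ((0 : AddMonoid.End (Additive ↥A)) d) = (1 : Q) := rfl
        _ = h⁻¹ * (1 : MulAut Q) h := by rw [MulAut.one_apply]; group
    | succ n ih =>
      rw [Finset.sum_range_succ, (show ((∑ i ∈ Finset.range n, S ^ i) + S ^ n) d
        = (∑ i ∈ Finset.range n, S ^ i) d + (S ^ n) d by exact AddMonoidHom.add_apply _ _ _)]
      have hvd : valQ ((∑ i ∈ Finset.range n, S ^ i) d + (S ^ n) d)
          = valQ ((∑ i ∈ Finset.range n, S ^ i) d) * valQ ((S ^ n) d) := rfl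
      rw [hvd, ih, valpow]
      have hvald : valQ d = h⁻¹ * τ h := rfl
      rw [hvald, map_mul, map_inv]
      have : (τ ^ n) (τ h) = (τ ^ (n + 1)) h := by rw [pow_succ]; rfl
      rw [this]
      group
  have hd : (∑ i ∈ Finset.range c, S ^ i) d = 0 := by
    apply valinj
    rw [tele c, hτc]
    calc h⁻¹ * (1 : MulAut Q) h = (1 : Q) := by rw [MulAut.one_apply]; group
      _ = valQ 0 := rfl
  obtain ⟨b, hbeq⟩ := core_module hc hcp htorM S Θ hco' hSc' F hΘF d hd
  -- translate conclusion to the subgroup level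
  set K : ↥A := ((S ^ (c - 1)) b).toMul with hK
  set Bm : ↥A := b.toMul with hBm
  set T : ↥A := (S b).toMul with hT
  have eqA : (K / Bm) * θ₀ (T / Bm) = D⁻¹ := by
    have e1 : ((S ^ (c - 1) - 1) + Θ * (S - 1)) b
        = ((S ^ (c - 1)) b - b) + Θ (S b - b) := by
      have r1 : ((S ^ (c - 1) - 1) + Θ * (S - 1)) b
          = ((S ^ (c - 1) - 1) b) + Θ ((S - 1) b) := rfl
      have r2 : (S ^ (c - 1) - 1) b = (S ^ (c - 1)) b - b := by
        rfl
      have r3 : (S - 1) b = S b - b := by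
        rfl
      rw [r1, r2, r3]
    rw [e1] at hbeq
    have e2 := congrArg Additive.toMul hbeq
    rw [toMul_add, toMul_sub, toMul_neg] at e2
    have e3 : (Θ (S b - b)).toMul = θ₀ (T / Bm) := by
      show θ₀ (S b - b).toMul = θ₀ (T / Bm)
      rw [toMul_sub]
    rw [e3] at e2
    exact e2
  refine ⟨↑K, K.2, ?_⟩
  have hτK : τ ↑K = (↑Bm : Q) := by
    have e4 : (↑K : Q) = (τ ^ (c - 1)) (↑Bm : Q) := valpow (c - 1) b
    rw [e4]
    calc τ ((τ ^ (c - 1)) (↑Bm : Q)) = (τ * τ ^ (c - 1)) (↑Bm : Q) := rfl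
      _ = (τ ^ c) (↑Bm : Q) := by rw [← pow_succ', Nat.sub_add_cancel hc]
      _ = (↑Bm : Q) := by rw [hτc]; rfl
  rw [hτK]
  have hswap : (↑Bm : Q)⁻¹ * ↑T = ↑T * (↑Bm : Q)⁻¹ :=
    habel _ (inv_mem Bm.2) _ T.2
  have hτh : τ h = h * ↑D := by
    have : (↑D : Q) = h⁻¹ * τ h := rfl
    rw [this]; group
  set P : ↥A := K * θ₀ (T / Bm) * D / Bm with hP
  have hP1 : P = 1 := by
    have : P = ((K / Bm) * θ₀ (T / Bm)) * D := by
      rw [hP, div_eq_mul_inv (K * θ₀ (T / Bm) * D) Bm, div_eq_mul_inv K Bm,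
        mul_right_comm (K * θ₀ (T / Bm)) D Bm⁻¹, mul_right_comm K (θ₀ (T / Bm)) Bm⁻¹]
    rw [this, eqA, inv_mul_cancel]
  have hθap : ∀ z : ↥A, (↑(θ₀ z) : Q) = h⁻¹ * ↑z * h := fun z => rfl
  have e6 : (↑P : Q) = (↑K * (h⁻¹ * ((↑T : Q) / ↑Bm) * h) * ↑D) / ↑Bm := rfl
  have hE : ((↑Bm : Q) * h * (↑K : Q)⁻¹)⁻¹ * τ ((↑Bm : Q) * h * (↑K : Q)⁻¹) = ↑P := by
    have e5 : τ ((↑Bm : Q) * h * (↑K : Q)⁻¹) = ↑T * (h * ↑D) * (↑Bm : Q)⁻¹ := by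
      rw [map_mul, map_mul, map_inv, hτK, ← hτh]
      rfl
    rw [e5, e6, div_eq_mul_inv, div_eq_mul_inv, ← hswap]
    group
  rw [hP1] at hE
  have hE' : ((↑Bm : Q) * h * (↑K : Q)⁻¹)⁻¹ * τ ((↑Bm : Q) * h * (↑K : Q)⁻¹) = 1 := by
    rw [hE]; rfl
  exact (inv_mul_eq_one.mp hE').symm


/-- Twisted conjugacy in a pro-`p` group: if `σ` is a continuous automorphism of
order dividing `c` (coprime to `p`) of a compact Hausdorff group `Γ` with a
`σ`-stable neighbourhood basis of normal subgroups `Γ = N 1 ⊇ N 2 ⊇ ⋯` whose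
successive quotients are abelian `p`-primary, then every `g ∈ Γ` can be written
`g = σ k * h * k⁻¹` with `σ h = h`. -/
theorem stmt_9 (p : ℕ) (hp : p.Prime) (c : ℕ) (hc : 1 ≤ c) (hcp : Nat.Coprime c p)
    {Γ : Type*} [Group Γ] [TopologicalSpace Γ] [IsTopologicalGroup Γ]
    [T2Space Γ] [CompactSpace Γ]
    (N : ℕ → Subgroup Γ)
    (hN1 : N 1 = ⊤)
    (hdec : ∀ n : ℕ, 1 ≤ n → N (n + 1) ≤ N n)
    (hnormal : ∀ n : ℕ, 1 ≤ n → (N n).Normal)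
    (hbasis : (𝓝 (1 : Γ)).HasBasis (fun n : ℕ => 1 ≤ n) (fun n => (N n : Set Γ)))
    (hab : ∀ n : ℕ, 1 ≤ n → ∀ a ∈ N n, ∀ b ∈ N n, a * b * a⁻¹ * b⁻¹ ∈ N (n + 1))
    (hpprim : ∀ n : ℕ, 1 ≤ n → ∀ a ∈ N n, ∃ m : ℕ, a ^ p ^ m ∈ N (n + 1))
    (σ : MulAut Γ) (hcont : Continuous ⇑σ) (hσc : σ ^ c = 1)
    (hσN : ∀ n : ℕ, 1 ≤ n → Subgroup.map σ.toMonoidHom (N n) = N n) :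
    ∀ g : Γ, ∃ k h : Γ, σ h = h ∧ g = σ k * h * k⁻¹ := by
  intro g
  have hcp' : ∀ t : ℕ, Nat.Coprime c (p ^ t) := fun t => hcp.pow_right t
  have hNopen : ∀ n : ℕ, 1 ≤ n → IsOpen ((N n : Set Γ)) := fun n hn =>
    Subgroup.isOpen_of_mem_nhds _ (hbasis.mem_of_mem hn)
  have hNclosed : ∀ n : ℕ, 1 ≤ n → IsClosed ((N n : Set Γ)) := fun n hn =>
    Subgroup.isClosed_of_isOpen _ (hNopen n hn)
  have tor : ∀ t : ℕ, ∀ g0 : Γ, ∃ M : ℕ, g0 ^ p ^ M ∈ N (1 + t) := by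
    intro t
    induction t with
    | zero =>
      intro g0
      refine ⟨0, ?_⟩
      rw [pow_zero, pow_one, hN1]
      trivial
    | succ t ih =>
      intro g0
      obtain ⟨M, hM⟩ := ih g0
      obtain ⟨m', hm'⟩ := hpprim (1 + t) (by omega) _ hM
      refine ⟨M + m', ?_⟩
      have e1 : g0 ^ p ^ (M + m') = (g0 ^ p ^ M) ^ p ^ m' := by
        rw [← pow_mul, pow_add]
      have e2 : 1 + (t + 1) = 1 + t + 1 := by omega
      rw [e1, e2]
      exact hm'
  -- the inductive refinement step through the finite quotient
  have step : ∀ m : ℕ, 1 ≤ m → ∀ h : Γ, h⁻¹ * σ h ∈ N m →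
      ∃ k₀ : Γ, (σ k₀ * h * k₀⁻¹)⁻¹ * σ (σ k₀ * h * k₀⁻¹) ∈ N (m + 1) := by
    intro m hm h hh
    haveI hnorm1 : (N (m + 1)).Normal := hnormal (m + 1) (by omega)
    haveI : Finite (Γ ⧸ N (m + 1)) :=
      Subgroup.quotient_finite_of_isOpen _ (hNopen (m + 1) (by omega))
    set π : Γ →* Γ ⧸ N (m + 1) := QuotientGroup.mk' (N (m + 1)) with hπ
    set τ : MulAut (Γ ⧸ N (m + 1)) :=
      QuotientGroup.congr (N (m + 1)) (N (m + 1)) σ (hσN (m + 1) (by omega)) with hτ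
    have τmk : ∀ x : Γ, τ (π x) = π (σ x) := fun x =>
      QuotientGroup.congr_mk' _ _ _ _ x
    have τpow : ∀ (n : ℕ) (x : Γ), (τ ^ n) (π x) = π ((σ ^ n) x) := by
      intro n
      induction n with
      | zero => intro x; rw [pow_zero, pow_zero]; rfl
      | succ n ih =>
        intro x
        rw [pow_succ', pow_succ']
        calc (τ * τ ^ n) (π x) = τ ((τ ^ n) (π x)) := rfl
          _ = τ (π ((σ ^ n) x)) := by rw [ih]
          _ = π (σ ((σ ^ n) x)) := τmk _
          _ = π ((σ * σ ^ n) x) := rfl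
    have hτc : τ ^ c = 1 := by
      apply MulEquiv.ext
      intro x
      obtain ⟨x, rfl⟩ := QuotientGroup.mk'_surjective (N (m + 1)) x
      rw [τpow c x, hσc]
      rfl
    have hQtor : ∀ x : Γ ⧸ N (m + 1), ∃ t : ℕ, x ^ p ^ t = 1 := by
      intro x
      obtain ⟨x, rfl⟩ := QuotientGroup.mk'_surjective (N (m + 1)) x
      obtain ⟨M, hM⟩ := tor m x
      refine ⟨M, ?_⟩
      rw [← map_pow]
      have e3 : 1 + m = m + 1 := by omega
      rw [e3] at hM
      exact (QuotientGroup.eq_one_iff _).2 hM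
    set A : Subgroup (Γ ⧸ N (m + 1)) := Subgroup.map π (N m) with hA
    have hAn : A.Normal := (hnormal m hm).map π (QuotientGroup.mk'_surjective _)
    have habel : ∀ a ∈ A, ∀ b ∈ A, a * b = b * a := by
      intro a ha b hb
      obtain ⟨x, hx, rfl⟩ := Subgroup.mem_map.1 ha
      obtain ⟨y, hy, rfl⟩ := Subgroup.mem_map.1 hb
      have hcm : π ((x * y) * (y * x)⁻¹) = 1 := by
        refine (QuotientGroup.eq_one_iff _).2 ?_
        have e4 : (x * y) * (y * x)⁻¹ = x * y * x⁻¹ * y⁻¹ := by group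
        rw [e4]
        exact hab m hm x hx y hy
      rw [map_mul, map_inv] at hcm
      have e5 := mul_inv_eq_one.1 hcm
      rw [← map_mul, ← map_mul, e5]
    have hτA : ∀ a ∈ A, τ a ∈ A := by
      intro a ha
      obtain ⟨x, hx, rfl⟩ := Subgroup.mem_map.1 ha
      rw [τmk]
      have hσx : σ x ∈ N m := by
        rw [← hσN m hm]
        exact ⟨x, hx, rfl⟩
      exact Subgroup.mem_map.2 ⟨σ x, hσx, rfl⟩
    have hδQ : (π h)⁻¹ * τ (π h) ∈ A := by
      rw [τmk, ← map_inv, ← map_mul]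
      exact Subgroup.mem_map.2 ⟨h⁻¹ * σ h, hh, rfl⟩
    obtain ⟨kk, hkkA, hkk⟩ := step_finite hc hcp' hQtor τ hτc A hAn habel hτA (π h) hδQ
    obtain ⟨k₀, hk₀, hπk⟩ := Subgroup.mem_map.1 hkkA
    refine ⟨k₀, ?_⟩
    have e6 : π (σ k₀ * h * k₀⁻¹) = τ kk * π h * kk⁻¹ := by
      rw [map_mul, map_mul, map_inv, ← hπk, ← τmk]
    have hπ1 : π ((σ k₀ * h * k₀⁻¹)⁻¹ * σ (σ k₀ * h * k₀⁻¹)) = 1 := by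
      rw [map_mul, map_inv]
      have e7 : π (σ (σ k₀ * h * k₀⁻¹)) = τ (τ kk * π h * kk⁻¹) := by
        rw [← τmk, e6]
      rw [e6, e7, hkk]
      group
    exact (QuotientGroup.eq_one_iff _).1 hπ1
  -- iterate the step
  have seq : ∀ n : ℕ, ∃ z : Γ × Γ, z.2⁻¹ * σ z.2 ∈ N (n + 1) ∧ g = σ z.1 * z.2 * z.1⁻¹ := by
    intro n
    induction n with
    | zero =>
      refine ⟨(1, g), ?_, by simp⟩
      rw [hN1]
      trivial
    | succ n ih =>
      obtain ⟨⟨k, h⟩, hh, hg⟩ := ih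
      obtain ⟨k₀, hk₀⟩ := step (n + 1) (by omega) h hh
      refine ⟨(k * k₀⁻¹, σ k₀ * h * k₀⁻¹), hk₀, ?_⟩
      rw [hg]
      show σ k * h * k⁻¹ = σ (k * k₀⁻¹) * (σ k₀ * h * k₀⁻¹) * (k * k₀⁻¹)⁻¹
      rw [map_mul, map_inv]
      group
  -- compactness
  set t : ℕ → Set (Γ × Γ) := fun n =>
    {z : Γ × Γ | z.2⁻¹ * σ z.2 ∈ N (n + 1) ∧ g = σ z.1 * z.2 * z.1⁻¹} with ht
  have hdec' : ∀ n, t (n + 1) ⊆ t n := fun n z hz =>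
    ⟨hdec (n + 1) (by omega) hz.1, hz.2⟩
  have hne : ∀ n, (t n).Nonempty := by
    intro n
    obtain ⟨z, h1, h2⟩ := seq n
    exact ⟨z, h1, h2⟩
  have hclosed : ∀ n, IsClosed (t n) := by
    intro n
    have c1 : Continuous fun z : Γ × Γ => z.2⁻¹ * σ z.2 :=
      (continuous_snd.inv).mul (hcont.comp continuous_snd)
    have c2 : Continuous fun z : Γ × Γ => σ z.1 * z.2 * z.1⁻¹ :=
      ((hcont.comp continuous_fst).mul continuous_snd).mul continuous_fst.inv
    exact IsClosed.inter (IsClosed.preimage c1 (hNclosed (n + 1) (by omega)))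
      (isClosed_eq continuous_const c2)
  obtain ⟨z, hz⟩ := IsCompact.nonempty_iInter_of_sequence_nonempty_isCompact_isClosed
    t hdec' hne ((hclosed 0).isCompact) hclosed
  have hz' : ∀ n : ℕ, z ∈ t n := fun n => Set.mem_iInter.1 hz n
  have h1 : z.2⁻¹ * σ z.2 = 1 := by
    by_contra hne1
    have hmem : (1 : Γ) ∈ ({z.2⁻¹ * σ z.2}ᶜ : Set Γ) :=
      Set.mem_compl_singleton_iff.mpr (Ne.symm hne1)
    obtain ⟨n, hn1, hnsub⟩ := (hbasis.mem_iff).1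
      (IsOpen.mem_nhds isOpen_compl_singleton hmem)
    have hxin : z.2⁻¹ * σ z.2 ∈ N n := by
      have := (hz' (n - 1)).1
      have e8 : n - 1 + 1 = n := Nat.sub_add_cancel hn1
      rwa [e8] at this
    exact hnsub hxin rfl
  exact ⟨z.1, z.2, (inv_mul_eq_one.1 h1).symm, (hz' 0).2⟩
end
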